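/- Let ℓ ≥ 2, ρ ∈ (0,1), and d ∈ (0,1). Define θ = 0 if d ∈ (0, 1−ρ) and θ = d−1+ρ if d ∈ [1−ρ, 1), and let D* be the ℓ×ℓ real matrix with diagonal entries d and off-diagonal entries θ. Then D* is positive definite, Σ^{(ℓ)} − D* is positive semidefinite, tr(D*) = ℓd, and for every real symmetric ℓ×ℓ matrix D with 0 ≺ D ⪯ Σ^{(ℓ)} and tr(D) ≤ ℓd one has det(D) ≤ det(D*), with equality only if D = D*. -/

import Mathlib

open Matrix Finset
open scoped MatrixOrder

namespace Stmt5Aux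

def Jmat (ℓ : ℕ) : Matrix (Fin ℓ) (Fin ℓ) ℝ := Matrix.of fun _ _ => 1

noncomputable def lin (ℓ : ℕ) (a b : ℝ) : Matrix (Fin ℓ) (Fin ℓ) ℝ :=
  a • (1 : Matrix (Fin ℓ) (Fin ℓ) ℝ) + b • Jmat ℓ

variable {ℓ : ℕ}

lemma lin_apply (a b : ℝ) (i j : Fin ℓ) :
    lin ℓ a b i j = if i = j then a + b else b := by
  simp only [lin, Jmat, Matrix.add_apply, Matrix.smul_apply, Matrix.one_apply, Matrix.of_apply,
    smul_eq_mul, mul_ite, mul_one, mul_zero]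
  split <;> ring

lemma lin_isHermitian (a b : ℝ) : (lin ℓ a b).IsHermitian := by
  show _ = _
  ext i j
  simp only [conjTranspose_apply, lin_apply, star_trivial]
  rcases eq_or_ne i j with h | h
  · simp [h]
  · simp [h, Ne.symm h]

lemma Jmat_mul_Jmat : Jmat ℓ * Jmat ℓ = (ℓ : ℝ) • Jmat ℓ := by
  ext i j
  simp [Jmat, Matrix.mul_apply]

lemma lin_mul (a b c e : ℝ) :
    lin ℓ a b * lin ℓ c e = lin ℓ (a * c) (a * e + b * c + b * e * ℓ) := by
  simp only [lin, add_mul, mul_add, smul_mul_assoc, mul_smul_comm, Jmat_mul_Jmat, one_mul,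
    mul_one, smul_smul]
  module

lemma lin_trace (a b : ℝ) : (lin ℓ a b).trace = ℓ * (a + b) := by
  have hJ : (Jmat ℓ).trace = (ℓ : ℝ) := by
    simp [Jmat, Matrix.trace, Matrix.diag]
  simp [lin, trace_add, trace_smul, trace_one, hJ, smul_eq_mul]
  ring

lemma Jmat_mulVec (x : Fin ℓ → ℝ) : Jmat ℓ *ᵥ x = fun _ => ∑ j, x j := by
  ext i
  simp [Jmat, mulVec, dotProduct]

lemma lin_quad (a b : ℝ) (x : Fin ℓ → ℝ) :
    x ⬝ᵥ (lin ℓ a b *ᵥ x) = a * (∑ i, x i ^ 2) + b * (∑ i, x i) ^ 2 := by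
  simp only [lin, add_mulVec, smul_mulVec, one_mulVec, dotProduct_add, dotProduct_smul,
    smul_eq_mul, Jmat_mulVec]
  have h1 : x ⬝ᵥ x = ∑ i, x i ^ 2 := by simp [dotProduct, sq]
  have h2 : (x ⬝ᵥ fun _ => ∑ j, x j) = (∑ i, x i) ^ 2 := by
    simp [dotProduct, sq, ← Finset.sum_mul]
  rw [h1, h2]

lemma lin_posSemidef {a b : ℝ} (ha : 0 ≤ a) (hb : 0 ≤ b) : (lin ℓ a b).PosSemidef := by
  refine .of_dotProduct_mulVec_nonneg (lin_isHermitian a b) fun x => ?_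
  rw [star_trivial, lin_quad]
  have : 0 ≤ ∑ i, x i ^ 2 := Finset.sum_nonneg fun i _ => sq_nonneg _
  nlinarith [sq_nonneg (∑ i, x i)]

lemma lin_posDef {a b : ℝ} (ha : 0 < a) (hb : 0 ≤ b) : (lin ℓ a b).PosDef := by
  refine .of_dotProduct_mulVec_pos (lin_isHermitian a b) fun x hx => ?_
  rw [star_trivial, lin_quad]
  obtain ⟨i, hi⟩ := Function.ne_iff.mp hx
  have h1 : 0 < ∑ i, x i ^ 2 := by
    refine Finset.sum_pos' (fun j _ => sq_nonneg _) ⟨i, Finset.mem_univ i, ?_⟩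
    exact sq_pos_of_ne_zero hi
  nlinarith [sq_nonneg (∑ i, x i)]

lemma lin_M_psd {c : ℝ} (hc : 0 ≤ c) : (lin ℓ (c * ℓ) (-c)).PosSemidef := by
  refine .of_dotProduct_mulVec_nonneg (lin_isHermitian _ _) fun x => ?_
  rw [star_trivial, lin_quad]
  have h := sq_sum_le_card_mul_sum_sq (s := (univ : Finset (Fin ℓ))) (f := x)
  simp only [Finset.card_univ, Fintype.card_fin] at h
  nlinarith


variable {m : Type*} [Fintype m] [DecidableEq m]

lemma psd_trace_nonneg {A : Matrix m m ℝ} (hA : A.PosSemidef) : 0 ≤ A.trace := by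
  refine Finset.sum_nonneg fun i _ => ?_
  have h := hA.dotProduct_mulVec_nonneg (Pi.single i 1)
  simpa [Matrix.diag, dotProduct, mulVec, Pi.single_apply, Finset.sum_ite_eq,
    Finset.sum_ite_eq'] using h

lemma trace_mul_nonneg {M N : Matrix m m ℝ} (hM : M.PosSemidef) (hN : N.PosSemidef) :
    0 ≤ (M * N).trace := by
  set R := CFC.sqrt M with hR
  have hRH : Rᴴ = R := (CFC.sqrt_nonneg M).posSemidef.1
  have hpsd : (R * N * Rᴴ).PosSemidef := hN.mul_mul_conjTranspose_same R
  have hMR : R * R = M := CFC.sqrt_mul_sqrt_self M hM.nonneg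
  have htr : (M * N).trace = (R * N * Rᴴ).trace := by
    rw [trace_mul_cycle, hRH, hMR]
  rw [htr]
  exact psd_trace_nonneg hpsd

lemma posdef_conj {B R : Matrix m m ℝ} (hB : B.PosDef) (hR : R.IsHermitian)
    (hdet : IsUnit R.det) : (R * B * R).PosDef := by
  refine .of_dotProduct_mulVec_pos ?_ ?_
  · have h := (hB.posSemidef.mul_mul_conjTranspose_same R).1
    rwa [hR.eq] at h
  · intro x hx
    have hy : R *ᵥ x ≠ 0 := by
      intro h
      apply hx
      have h2 := congrArg (fun v => R⁻¹ *ᵥ v) h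
      simpa [mulVec_mulVec, Matrix.nonsing_inv_mul R hdet] using h2
    have h := hB.dotProduct_mulVec_pos hy
    have hexp : star x ⬝ᵥ (R * B * R) *ᵥ x = star (R *ᵥ x) ⬝ᵥ B *ᵥ (R *ᵥ x) := by
      conv_lhs => rw [← hR.eq]
      rw [star_mulVec, ← mulVec_mulVec, ← mulVec_mulVec, dotProduct_mulVec, hR.eq]
    rwa [hexp]

lemma key {A B : Matrix m m ℝ} (hA : A.PosDef) (hB : B.PosDef)
    (htr : (A⁻¹ * B).trace ≤ (Fintype.card m : ℝ)) :
    B.det ≤ A.det ∧ (B.det = A.det → B = A) := by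
  have hAi : (A⁻¹).PosDef := hA.inv
  set R := CFC.sqrt A⁻¹ with hRdef
  have hRH : R.IsHermitian := (CFC.sqrt_nonneg A⁻¹).posSemidef.1
  have hRR : R * R = A⁻¹ := CFC.sqrt_mul_sqrt_self A⁻¹ hAi.posSemidef.nonneg
  have hdetA : 0 < A.det := hA.det_pos
  have hdetAi : 0 < (A⁻¹).det := hAi.det_pos
  have hdetR : IsUnit R.det := by
    refine isUnit_iff_ne_zero.mpr fun h => ?_
    rw [← hRR, det_mul, h, mul_zero] at hdetAi
    exact lt_irrefl 0 hdetAi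
  have hAdet : IsUnit A.det := isUnit_iff_ne_zero.mpr hA.det_pos.ne'
  have hAinvdet : A.det * (A⁻¹).det = 1 := by
    rw [← det_mul, Matrix.mul_nonsing_inv _ hAdet, det_one]
  set C := R * B * R with hCdef
  have hCpd : C.PosDef := posdef_conj hB hRH hdetR
  have hCtr : C.trace = (A⁻¹ * B).trace := by
    rw [hCdef, trace_mul_cycle, hRR]
  have hCdet : C.det = (A⁻¹).det * B.det := by
    rw [hCdef, det_mul, det_mul, ← hRR, det_mul]; ring
  -- eigenvalues of C
  have hher : C.IsHermitian := hCpd.isHermitian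
  have hev : ∀ i, 0 < hher.eigenvalues i := hCpd.eigenvalues_pos
  have hU := (Matrix.mem_unitaryGroup_iff').mp (hher.eigenvectorUnitary).2
  have hprod : C.det = ∏ i, hher.eigenvalues i := by
    have h := hher.det_eq_prod_eigenvalues
    exact_mod_cast h
  have hsum : C.trace = ∑ i, hher.eigenvalues i := by
    calc C.trace
        = ((hher.eigenvectorUnitary : Matrix m m ℝ) *
            diagonal (RCLike.ofReal ∘ hher.eigenvalues) *
            (star (hher.eigenvectorUnitary : Matrix m m ℝ))).trace := by
          exact congrArg Matrix.trace (hher.spectral_theorem.trans (Unitary.conjStarAlgAut_apply _ _))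
      _ = ((star (hher.eigenvectorUnitary : Matrix m m ℝ) *
            (hher.eigenvectorUnitary : Matrix m m ℝ)) *
            diagonal (RCLike.ofReal ∘ hher.eigenvalues)).trace := by
          rw [trace_mul_cycle, mul_assoc]
      _ = (diagonal (RCLike.ofReal ∘ hher.eigenvalues)).trace := by
          rw [hU, one_mul]
      _ = ∑ i, hher.eigenvalues i := by simp [trace_diagonal]
  -- the exponential bound
  have hle : ∀ i : m, hher.eigenvalues i ≤ Real.exp (hher.eigenvalues i - 1) := by
    intro i
    have := Real.add_one_le_exp (hher.eigenvalues i - 1)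
    linarith
  have hexp_prod : ∏ i, Real.exp (hher.eigenvalues i - 1) =
      Real.exp (C.trace - (Fintype.card m : ℝ)) := by
    rw [← Real.exp_sum, hsum]
    congr 1
    rw [Finset.sum_sub_distrib]
    simp [Finset.card_univ]
  have hprodle : C.det ≤ Real.exp (C.trace - (Fintype.card m : ℝ)) := by
    rw [hprod, ← hexp_prod]
    exact Finset.prod_le_prod (fun i _ => (hev i).le) (fun i _ => hle i)
  have htrC : C.trace ≤ (Fintype.card m : ℝ) := hCtr ▸ htr
  have hexple : Real.exp (C.trace - (Fintype.card m : ℝ)) ≤ 1 := by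
    rw [← Real.exp_zero]
    exact Real.exp_le_exp.mpr (by linarith)
  have hdetCle : C.det ≤ 1 := hprodle.trans hexple
  constructor
  · -- inequality
    have := mul_le_mul_of_nonneg_left hdetCle hdetA.le
    rw [hCdet, mul_one, ← mul_assoc, hAinvdet, one_mul] at this
    exact this
  · -- equality
    intro hdeq
    have hdetC1 : C.det = 1 := by
      rw [hCdet, hdeq, mul_comm]
      exact hAinvdet
    -- all eigenvalues equal 1
    have hall : ∀ i : m, hher.eigenvalues i = 1 := by
      by_contra hne
      push_neg at hne
      obtain ⟨i, hi⟩ := hne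
      have hilt : hher.eigenvalues i < Real.exp (hher.eigenvalues i - 1) := by
        have hne0 : hher.eigenvalues i - 1 ≠ 0 := sub_ne_zero.mpr hi
        have := Real.add_one_lt_exp hne0
        linarith
      have hstrict : ∏ j, hher.eigenvalues j < ∏ j, Real.exp (hher.eigenvalues j - 1) :=
        Finset.prod_lt_prod (fun j _ => hev j) (fun j _ => hle j)
          ⟨i, Finset.mem_univ i, hilt⟩
      rw [hexp_prod, ← hprod, hdetC1] at hstrict
      linarith
    have hCone : C = 1 := by
      have hdiag : diagonal (RCLike.ofReal ∘ hher.eigenvalues) = (1 : Matrix m m ℝ) := by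
        have : (RCLike.ofReal ∘ hher.eigenvalues : m → ℝ) = fun _ => 1 := by
          funext j; simp [hall j]
        rw [this]
        exact Matrix.diagonal_one
      calc C = (hher.eigenvectorUnitary : Matrix m m ℝ) *
            diagonal (RCLike.ofReal ∘ hher.eigenvalues) *
            (star (hher.eigenvectorUnitary : Matrix m m ℝ)) := hher.spectral_theorem.trans (Unitary.conjStarAlgAut_apply _ _)
        _ = (hher.eigenvectorUnitary : Matrix m m ℝ) *
            (star (hher.eigenvectorUnitary : Matrix m m ℝ)) := by rw [hdiag, mul_one]
        _ = 1 := (Matrix.mem_unitaryGroup_iff).mp (hher.eigenvectorUnitary).2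
    -- deduce B = A
    have hB1 : R * B * R = 1 := hCone
    have h2 : B = R⁻¹ * R⁻¹ := by
      calc B = (R⁻¹ * R) * B * (R * R⁻¹) := by
              rw [Matrix.nonsing_inv_mul _ hdetR, Matrix.mul_nonsing_inv _ hdetR,
                one_mul, mul_one]
        _ = R⁻¹ * (R * B * R) * R⁻¹ := by simp only [Matrix.mul_assoc]
        _ = R⁻¹ * 1 * R⁻¹ := by rw [hB1]
        _ = R⁻¹ * R⁻¹ := by rw [mul_one]
    rw [h2, ← Matrix.mul_inv_rev, hRR, Matrix.nonsing_inv_nonsing_inv _ hAdet]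


lemma lin_one : lin ℓ 1 0 = (1 : Matrix (Fin ℓ) (Fin ℓ) ℝ) := by
  simp [lin]

lemma lin_sub (a b c e : ℝ) : lin ℓ a b - lin ℓ c e = lin ℓ (a - c) (b - e) := by
  simp only [lin, sub_smul]
  module

lemma lin_decomp (x y z : ℝ) :
    lin ℓ (x + y) z = x • (1 : Matrix (Fin ℓ) (Fin ℓ) ℝ) + lin ℓ y z := by
  simp only [lin, add_smul]
  module

end Stmt5Aux

open Stmt5Aux in
/-- for ρ ∈ (0,1), the matrix `D*` with diagonal entries `d` and off-diagonal
entries `θ` (with `θ = 0` for `d < 1-ρ` and `θ = d-1+ρ` otherwise) is the unique optimal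
solution of the convex program defining the centralized Gaussian rate-distortion function. -/
theorem stmt_5 (ℓ : ℕ) (hℓ : 2 ≤ ℓ) (ρ d : ℝ)
    (hρ₁ : 0 < ρ) (hρ₂ : ρ < 1) (hd₁ : 0 < d) (hd₂ : d < 1)
    (θ : ℝ) (hθ : θ = if d < 1 - ρ then 0 else d - 1 + ρ)
    (S Dstar : Matrix (Fin ℓ) (Fin ℓ) ℝ)
    (hS : S = Matrix.of fun i j => if i = j then (1 : ℝ) else ρ)
    (hDstar : Dstar = Matrix.of fun i j => if i = j then d else θ) :
    Dstar.PosDef ∧ (S - Dstar).PosSemidef ∧ Dstar.trace = (ℓ : ℝ) * d ∧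
    ∀ D : Matrix (Fin ℓ) (Fin ℓ) ℝ, D.IsSymm → D.PosDef → (S - D).PosSemidef →
      D.trace ≤ (ℓ : ℝ) * d → (D.det ≤ Dstar.det ∧ (D.det = Dstar.det → D = Dstar)) := by
  have hSlin : S = lin ℓ (1 - ρ) ρ := by
    rw [hS]; ext i j; rw [lin_apply]
    simp only [Matrix.of_apply]
    split <;> ring
  have hDlin : Dstar = lin ℓ (d - θ) θ := by
    rw [hDstar]; ext i j; rw [lin_apply]
    simp only [Matrix.of_apply]
    split <;> ring
  obtain ⟨ha, hθ0, h1, h2⟩ : 0 < d - θ ∧ 0 ≤ θ ∧ 0 ≤ 1 - ρ - (d - θ) ∧ 0 ≤ ρ - θ := by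
    rcases lt_or_ge d (1 - ρ) with h | h
    · rw [hθ, if_pos h]
      exact ⟨by linarith, by linarith, by linarith, by linarith⟩
    · rw [hθ, if_neg (not_lt.mpr h)]
      exact ⟨by linarith, by linarith, by linarith, by linarith⟩
  have hDstarpd : Dstar.PosDef := hDlin ▸ lin_posDef ha hθ0
  have hcard : ((Fintype.card (Fin ℓ) : ℕ) : ℝ) = (ℓ : ℝ) := by simp
  refine ⟨hDstarpd, ?_, ?_, ?_⟩
  · rw [hSlin, hDlin, lin_sub]
    exact lin_posSemidef h1 h2
  · rw [hDlin, lin_trace]; ring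
  · intro D hDsym hDpd hSD htrD
    suffices htrr : (Dstar⁻¹ * D).trace ≤ ((Fintype.card (Fin ℓ) : ℕ) : ℝ) by
      exact key hDstarpd hDpd htrr
    rw [hcard]
    rcases lt_or_ge d (1 - ρ) with hcase | hcase
    · -- θ = 0, Dstar = d • 1
      have hθ1 : θ = 0 := by rw [hθ, if_pos hcase]
      have hE : Dstar * lin ℓ (d - θ)⁻¹ 0 = 1 := by
        rw [hDlin, lin_mul, hθ1]
        have hX : (d - 0) * (d - 0)⁻¹ = 1 := mul_inv_cancel₀ (by linarith [ha, hθ1])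
        rw [show (d - 0) * 0 + 0 * (d - 0)⁻¹ + 0 * 0 * (ℓ : ℝ) = 0 by ring, hX, lin_one]
      have hinv : Dstar⁻¹ = lin ℓ (d - θ)⁻¹ 0 := Matrix.inv_eq_right_inv hE
      have hsm : lin ℓ (d - θ)⁻¹ 0 = (d - θ)⁻¹ • (1 : Matrix (Fin ℓ) (Fin ℓ) ℝ) := by
        simp [lin]
      have htr2 : (Dstar⁻¹ * D).trace = (d - θ)⁻¹ * D.trace := by
        rw [hinv, hsm, Matrix.smul_mul, one_mul, Matrix.trace_smul, smul_eq_mul]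
      rw [htr2, hθ1]
      have hdpos : (0 : ℝ) < d := hd₁
      have : (d - 0)⁻¹ * D.trace ≤ (d - 0)⁻¹ * ((ℓ : ℝ) * d) := by
        apply mul_le_mul_of_nonneg_left htrD
        rw [sub_zero]
        exact inv_nonneg.mpr hd₁.le
      calc (d - 0)⁻¹ * D.trace ≤ (d - 0)⁻¹ * ((ℓ : ℝ) * d) := this
        _ = (ℓ : ℝ) := by field_simp; simp [hd₁.ne']
    · -- θ = d - 1 + ρ
      have hθ2 : θ = d - 1 + ρ := by rw [hθ, if_neg (not_lt.mpr hcase)]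
      have hd1ρ : d - θ = 1 - ρ := by rw [hθ2]; ring
      set t : ℝ := 1 - ρ + (ℓ : ℝ) * θ with htdef
      have ht : 0 < t := by
        have : 0 ≤ (ℓ : ℝ) * θ := mul_nonneg (Nat.cast_nonneg ℓ) hθ0
        simp only [htdef]; linarith
      set c : ℝ := θ / ((1 - ρ) * t) with hcdef
      have hc0 : 0 ≤ c := by
        apply div_nonneg hθ0
        apply mul_nonneg (by linarith) ht.le
      have hρne : (1 : ℝ) - ρ ≠ 0 := by linarith
      have hE : Dstar * lin ℓ (t⁻¹ + c * ℓ) (-c) = 1 := by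
        rw [hDlin, lin_mul]
        have htne : t ≠ 0 := ht.ne'
        have hX : (d - θ) * (t⁻¹ + c * ℓ) = 1 := by
          rw [hd1ρ, hcdef]
          field_simp
          linarith [htdef]
        have hY : (d - θ) * (-c) + θ * (t⁻¹ + c * ℓ) + θ * (-c) * ℓ = 0 := by
          rw [hd1ρ, hcdef]
          field_simp
          ring
        rw [hX, hY, lin_one]
      have hinv : Dstar⁻¹ = lin ℓ (t⁻¹ + c * ℓ) (-c) := Matrix.inv_eq_right_inv hE
      set M : Matrix (Fin ℓ) (Fin ℓ) ℝ := lin ℓ (c * ℓ) (-c) with hMdef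
      have hMpsd : M.PosSemidef := lin_M_psd hc0
      have hdecomp : lin ℓ (t⁻¹ + c * ℓ) (-c)
          = t⁻¹ • (1 : Matrix (Fin ℓ) (Fin ℓ) ℝ) + M := lin_decomp _ _ _
      have htrE : (Dstar⁻¹ * D).trace = t⁻¹ * D.trace + (M * D).trace := by
        rw [hinv, hdecomp, add_mul, Matrix.smul_mul, one_mul, Matrix.trace_add,
          Matrix.trace_smul, smul_eq_mul]
      have hMSD : 0 ≤ (M * (S - D)).trace := trace_mul_nonneg hMpsd hSD
      have hsplit : (M * D).trace = (M * S).trace - (M * (S - D)).trace := by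
        rw [Matrix.mul_sub, Matrix.trace_sub]
        ring
      have hMS : (M * S).trace
          = (ℓ : ℝ) * (c * ℓ * (1 - ρ) + (c * ℓ * ρ + -c * (1 - ρ) + -c * ρ * ℓ)) := by
        rw [hSlin, hMdef, lin_mul, lin_trace]
      have htne : t ≠ 0 := ht.ne'
      have hdt : d + ((ℓ : ℝ) - 1) * θ = t := by
        rw [htdef]
        linear_combination hd1ρ
      have hfinal : t⁻¹ * ((ℓ : ℝ) * d)
          + (ℓ : ℝ) * (c * ℓ * (1 - ρ) + (c * ℓ * ρ + -c * (1 - ρ) + -c * ρ * ℓ)) = (ℓ : ℝ) := by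
        have e1 : c * ((1 - ρ) * t) = θ := by
          rw [hcdef]
          field_simp
        have e2 : t * t⁻¹ = 1 := mul_inv_cancel₀ htne
        linear_combination (t⁻¹ * (ℓ : ℝ) * ((ℓ : ℝ) - 1)) * e1
          + ((ℓ : ℝ) - (ℓ : ℝ) * ((ℓ : ℝ) - 1) * (1 - ρ) * c) * e2
          + (t⁻¹ * (ℓ : ℝ)) * hdt
      have htinv : 0 < t⁻¹ := inv_pos.mpr ht
      have hstep : t⁻¹ * D.trace ≤ t⁻¹ * ((ℓ : ℝ) * d) :=
        mul_le_mul_of_nonneg_left htrD htinv.le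
      rw [htrE, hsplit]
      linarith [hMS, hfinal, hstep, hMSD]
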